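/- Let X_G = {(x_k) ∈ Σ₂ : x_k x_{2k} = 0 for all k ≥ 1}. Then X_G ⊆ A_0 and the Hausdorff dimensions coincide: dim_H(X_G) = dim_H(A_0). -/

import Mathlib

open Filter MeasureTheory Real Set
open scoped ENNReal NNReal

noncomputable section

/-- `Σ₂ = {0,1}^ℕ`: the space of 0-1 sequences `(x_k)_{k ≥ 1}`, where the entry `x_k`
(for `k ≥ 1`) is represented by `x (k-1) : Bool`. -/
abbrev Sigma2 : Type := ℕ → Bool

/-- The metric `ρ((x_k),(y_k)) = 2^{-min{n : x_n ≠ y_n}}` (up to the indexing convention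
`dist x y = (1/2)^{first index where x,y differ}`). -/
noncomputable instance : MetricSpace Sigma2 :=
  PiNat.metricSpaceOfDiscreteUniformity fun _ => rfl

/-- The digit `x_k ∈ {0,1}` (for `k ≥ 1`) of a sequence, as a real number. -/
def xval (x : Sigma2) (k : ℕ) : ℝ := if x (k - 1) then 1 else 0

/-- `A_θ = {(x_k) ∈ Σ₂ : lim_{n→∞} (1/n) ∑_{k=1}^n x_k x_{2k} = θ}`. -/
def Aset (θ : ℝ) : Set Sigma2 :=
  {x | Tendsto (fun n : ℕ => (∑ k ∈ Finset.Icc 1 n, xval x k * xval x (2 * k)) / (n : ℝ))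
    atTop (nhds θ)}

/-- The cylinder set `[u]` of sequences starting with the finite word `u`
(a list `u` represents the word `u_1 … u_n` with `u_k = u.getD (k-1) false`). -/
def cylinder (u : List Bool) : Set Sigma2 :=
  {x | ∀ i < u.length, x i = u.getD i false}

/-- Initial distribution: `π(0) = 1 - p`, `π(1) = p`. -/
def initProb (p : ℝ) (b : Bool) : ℝ := if b then p else 1 - p

/-- Transition probabilities: `P(0,0) = 1-p`, `P(0,1) = p`, `P(1,0) = q`, `P(1,1) = 1-q`. -/
def transProb (p q : ℝ) (a b : Bool) : ℝ :=
  if a then (if b then 1 - q else q) else (if b then p else 1 - p)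

/-- Markov weight `μ[w] = π(w_1) ∏_{j=1}^{m-1} P(w_j, w_{j+1})` of a finite word `w`. -/
def mweight (p q : ℝ) (w : List Bool) : ℝ :=
  if w = [] then 1
  else initProb p (w.getD 0 false) *
    ∏ j ∈ Finset.range (w.length - 1), transProb p q (w.getD j false) (w.getD (j + 1) false)

/-- The subword `u|_{J(i)} = (u_i, u_{2i}, u_{4i}, …)` of a finite word `u` along the
geometric progression `J(i) = {2^r i : r ≥ 0}`, keeping the indices `2^r i ≤ |u|`. -/
def subword (u : List Bool) (i : ℕ) : List Bool :=
  ((List.range (u.length + 1)).filter (fun r => 2 ^ r * i ≤ u.length)).map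
    (fun r => u.getD (2 ^ r * i - 1) false)

/-- `ℙ_μ[u] = ∏_{i ≤ n, i odd} μ[u|_{J(i)}]` for a finite word `u` of length `n`. -/
def PmuWord (p q : ℝ) (u : List Bool) : ℝ :=
  ∏ i ∈ (Finset.Icc 1 u.length).filter (fun i => Odd i), mweight p q (subword u i)

/-- `Pm` is the (probability) measure `ℙ_μ` on `Σ₂` determined by its values
`ℙ_μ[u] = ∏_{i odd} μ[u|_{J(i)}]` on cylinder sets. -/
def IsPmu (p q : ℝ) (Pm : Measure Sigma2) : Prop :=
  IsProbabilityMeasure Pm ∧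
    ∀ u : List Bool, Pm (cylinder u) = ENNReal.ofReal (PmuWord p q u)

/-- The initial word `x_1^n = x_1 … x_n` of a sequence. -/
def word (x : Sigma2) (n : ℕ) : List Bool := (List.range n).map x

/-- `N_1(x_m^n) = #{k ∈ [m,n] : x_k = 1}`. -/
def N1 (x : Sigma2) (m n : ℕ) : ℕ :=
  ((Finset.Icc m n).filter (fun k => x (k - 1) = true)).card

/-- `N_{ij}(x_1^m) = #{k ≤ m : x_k = i, x_{2k} = j}` (digits `i, j` as booleans). -/
def Nij (x : Sigma2) (i j : Bool) (m : ℕ) : ℕ :=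
  ((Finset.Icc 1 m).filter (fun k => x (k - 1) = i ∧ x (2 * k - 1) = j)).card

/-- `N_{1,odd}(x_1^n) = #{k ≤ n : k odd, x_k = 1}`. -/
def N1odd (x : Sigma2) (n : ℕ) : ℕ :=
  ((Finset.Icc 1 n).filter (fun k => Odd k ∧ x (k - 1) = true)).card

/-- The binary entropy function `H(t) = -t log₂ t - (1-t) log₂ (1-t)`. -/
def Hent (t : ℝ) : ℝ := -(t * Real.logb 2 t) - (1 - t) * Real.logb 2 (1 - t)


namespace FLM

def XGset : Set Sigma2 := {x : Sigma2 | ∀ k : ℕ, 1 ≤ k → xval x k * xval x (2 * k) = 0}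

lemma xval_mul_eq_zero_iff (x : Sigma2) (k : ℕ) :
    xval x k * xval x (2 * k) = 0 ↔ ¬(x (k - 1) = true ∧ x (2 * k - 1) = true) := by
  unfold xval
  rcases hb : x (k-1) <;> rcases hc : x (2*k-1) <;> simp

lemma xval_term (x : Sigma2) (k : ℕ) :
    xval x k * xval x (2 * k) = if (x (k - 1) = true ∧ x (2 * k - 1) = true) then 1 else 0 := by
  unfold xval
  rcases hb : x (k-1) <;> rcases hc : x (2*k-1) <;> simp

lemma sum_eq_Nij (x : Sigma2) (n : ℕ) :
    (∑ k ∈ Finset.Icc 1 n, xval x k * xval x (2 * k)) = (Nij x true true n : ℝ) := by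
  unfold Nij
  rw [Finset.card_filter]
  push_cast
  refine Finset.sum_congr rfl fun k _ => ?_
  rw [xval_term]

lemma XG_subset_A0 : XGset ⊆ Aset 0 := by
  intro x hx
  have h : ∀ n : ℕ, (∑ k ∈ Finset.Icc 1 n, xval x k * xval x (2 * k)) = 0 := by
    intro n
    refine Finset.sum_eq_zero fun k hk => ?_
    exact hx k (Finset.mem_Icc.1 hk).1
  have : (fun n : ℕ => (∑ k ∈ Finset.Icc 1 n, xval x k * xval x (2 * k)) / (n : ℝ))
      = fun _ => (0:ℝ) := by
    funext n; rw [h n, zero_div]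
  unfold Aset
  rw [Set.mem_setOf_eq, this]
  exact tendsto_const_nhds
def Eset (p m : ℕ) : Set Sigma2 := {x | ∀ n, m ≤ n → Nij x true true n * 2 ^ p ≤ n}

def zmap (x : Sigma2) : Sigma2 :=
  fun j => if j % 2 = 1 ∧ x ((j - 1) / 2) = true then false else x j

lemma zmap_le {x : Sigma2} {j : ℕ} (h : zmap x j = true) : x j = true := by
  unfold zmap at h
  split at h
  · exact absurd h (by simp)
  · exact h

lemma zmap_mem_XG (x : Sigma2) : zmap x ∈ XGset := by
  intro k hk
  rw [xval_mul_eq_zero_iff]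
  rintro ⟨h1, h2⟩
  unfold zmap at h2
  split at h2
  · exact absurd h2 (by simp)
  · rename_i hc
    have hmod : (2 * k - 1) % 2 = 1 := by omega
    have hdiv : (2 * k - 1 - 1) / 2 = k - 1 := by omega
    rw [hmod, hdiv] at hc
    exact hc ⟨rfl, zmap_le h1⟩

def mset (y : Sigma2) (S : Finset ℕ) : Sigma2 := fun j => if j ∈ S then true else y j

def goodSets (p n : ℕ) : Finset (Finset ℕ) :=
  (Finset.range n).powerset.filter (fun S => S.card * 2 ^ p ≤ n)

lemma cover_step {p m n : ℕ} (hn : m ≤ n) {x y : Sigma2} (hx : x ∈ Eset p m)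
    (hfx : zmap x ∈ PiNat.cylinder y n) :
    ∃ S ∈ goodSets p n, x ∈ PiNat.cylinder (mset y S) n := by
  classical
  set S : Finset ℕ := (Finset.range n).filter (fun j => x j ≠ zmap x j) with hS
  have hdiff : ∀ j ∈ S, j % 2 = 1 ∧ x ((j - 1) / 2) = true ∧ x j = true := by
    intro j hj
    rw [hS, Finset.mem_filter] at hj
    obtain ⟨-, hne⟩ := hj
    by_cases hc : j % 2 = 1 ∧ x ((j - 1) / 2) = true
    · refine ⟨hc.1, hc.2, ?_⟩
      have : zmap x j = false := by unfold zmap; rw [if_pos hc]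
      rcases hxj : x j
      · exact absurd (by rw [hxj, this]) hne
      · rfl
    · exact absurd (by unfold zmap; rw [if_neg hc]) hne
  refine ⟨S, ?_, ?_⟩
  · rw [goodSets, Finset.mem_filter]
    constructor
    · rw [Finset.mem_powerset, hS]; exact Finset.filter_subset _ _
    · -- S.card ≤ Nij x true true n
      have hcard : S.card ≤ Nij x true true n := by
        unfold Nij
        apply Finset.card_le_card_of_injOn (fun j => (j + 1) / 2)
        · intro j hj
          obtain ⟨hmod, hx2, hx1⟩ := hdiff j hj
          have hjn : j < n := Finset.mem_range.1 (Finset.mem_of_mem_filter j hj)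
          rw [Finset.mem_coe, Finset.mem_filter, Finset.mem_Icc]
          have h1 : 1 ≤ (j + 1) / 2 := by omega
          have h2 : (j + 1) / 2 ≤ n := by omega
          have e1 : (j + 1) / 2 - 1 = (j - 1) / 2 := by omega
          have e2 : 2 * ((j + 1) / 2) - 1 = j := by omega
          exact ⟨⟨h1, h2⟩, by rw [e1]; exact hx2, by rw [e2]; exact hx1⟩
        · intro a ha b hb hab
          have h1 := (hdiff a ha).1
          have h2 := (hdiff b hb).1
          have hab' : (a + 1) / 2 = (b + 1) / 2 := hab
          omega
      calc S.card * 2 ^ p ≤ Nij x true true n * 2 ^ p := by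
            exact Nat.mul_le_mul_right _ hcard
        _ ≤ n := hx n hn
  · intro i hi
    by_cases hiS : i ∈ S
    · obtain ⟨-, -, hx1⟩ := hdiff i hiS
      rw [hx1]; unfold mset; rw [if_pos hiS]
    · have : x i = zmap x i := by
        by_contra hne
        exact hiS (by rw [hS, Finset.mem_filter]; exact ⟨Finset.mem_range.2 hi, hne⟩)
      rw [this, hfx i hi]
      unfold mset; rw [if_neg hiS]

lemma A0_subset_union (p : ℕ) : Aset 0 ⊆ ⋃ m : ℕ, Eset p m := by
  intro x hx
  have hx' : Tendsto (fun n : ℕ => (Nij x true true n : ℝ) / n) atTop (nhds 0) := by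
    have := hx
    unfold Aset at this
    rw [Set.mem_setOf_eq] at this
    convert this using 2 with n
    rw [sum_eq_Nij]
  have hev : ∀ᶠ n : ℕ in atTop, (Nij x true true n : ℝ) / n < (1/2)^p / 2 := by
    have hpos : (0:ℝ) < (1/2)^p / 2 := by positivity
    exact hx'.eventually_lt_const hpos
  obtain ⟨m₀, hm⟩ := eventually_atTop.1 hev
  refine Set.mem_iUnion.2 ⟨max m₀ 1, fun n hn => ?_⟩
  have h1 := hm n (le_trans (le_max_left _ _) hn)
  have hn1 : (1:ℕ) ≤ n := le_trans (le_max_right _ _) hn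
  have hnpos : (0:ℝ) < n := by exact_mod_cast hn1
  rw [div_lt_iff₀ hnpos] at h1
  have h2 : (Nij x true true n : ℝ) * 2 ^ p ≤ (n : ℝ) := by
    have hhalf : (1/2:ℝ)^p * 2^p = 1 := by
      rw [← mul_pow]; norm_num
    nlinarith [pow_pos (by norm_num : (0:ℝ) < 2) p, pow_pos (by norm_num : (0:ℝ) < 1/2) p]
  exact_mod_cast (by push_cast; exact h2 : ((Nij x true true n * 2 ^ p : ℕ) : ℝ) ≤ (n:ℝ))



lemma half_pow (n : ℕ) : ((1/2 : ℝ≥0∞))^n = ENNReal.ofReal ((1/2 : ℝ)^n) := by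
  rw [ENNReal.ofReal_pow (by norm_num : (0:ℝ) ≤ 1/2), one_div, one_div,
    ENNReal.ofReal_inv_of_pos (by norm_num), ENNReal.ofReal_ofNat]

lemma edist_le_of_cyl {x y : Sigma2} {n : ℕ} (h : y ∈ PiNat.cylinder x n) :
    edist y x ≤ (1/2 : ℝ≥0∞)^n := by
  rw [edist_dist, half_pow]
  exact ENNReal.ofReal_le_ofReal (PiNat.mem_cylinder_iff_dist_le.1 h)

lemma diam_cyl_le (x : Sigma2) (n : ℕ) : EMetric.diam (PiNat.cylinder x n) ≤ (1/2 : ℝ≥0∞)^n := by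
  apply EMetric.diam_le
  intro a ha b hb
  have hab : a ∈ PiNat.cylinder b n := by
    intro i hi; rw [ha i hi, hb i hi]
  exact edist_le_of_cyl hab

lemma subset_cyl {S : Set Sigma2} {n : ℕ} (h : EMetric.diam S ≤ (1/2 : ℝ≥0∞)^n) {y : Sigma2}
    (hy : y ∈ S) : S ⊆ PiNat.cylinder y n := by
  intro z hz
  rw [PiNat.mem_cylinder_iff_dist_le]
  have h2 : edist z y ≤ (1/2 : ℝ≥0∞)^n := (EMetric.edist_le_diam_of_mem hz hy).trans h
  rw [edist_dist, half_pow] at h2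
  exact (ENNReal.ofReal_le_ofReal_iff (by positivity)).1 h2

lemma two_mul_half_pow {k : ℕ} (hk : 1 ≤ k) : 2 * (1/2:ℝ≥0∞)^k = (1/2:ℝ≥0∞)^(k-1) := by
  have h1 : (2:ℝ≥0∞) * (1/2) = 1 := by
    rw [one_div, ENNReal.mul_inv_cancel (by norm_num) (by norm_num)]
  conv_lhs => rw [show k = (k-1)+1 by omega]
  calc 2 * (1/2:ℝ≥0∞)^((k-1)+1) = (2 * (1/2)) * (1/2)^(k-1) := by rw [pow_succ]; ring
    _ = (1/2:ℝ≥0∞)^(k-1) := by rw [h1, one_mul]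

lemma exists_scale {S : Set Sigma2} {y : Sigma2} (hy : y ∈ S) {L : ℕ}
    (hdiam : EMetric.diam S ≤ (1/2 : ℝ≥0∞)^(L+1)) (hne : EMetric.diam S ≠ 0) :
    ∃ n : ℕ, L ≤ n ∧ S ⊆ PiNat.cylinder y n ∧
      ((1/2 : ℝ≥0∞)^n) ≤ 2 * EMetric.diam S := by
  -- find a pair with edist > diam / 2
  have htop : EMetric.diam S ≠ ⊤ :=
    ne_top_of_le_ne_top (ENNReal.pow_ne_top (by norm_num)) hdiam
  have hlt : EMetric.diam S / 2 < EMetric.diam S := by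
    apply ENNReal.half_lt_self hne htop
  obtain ⟨a, ha, b, hb, hab⟩ : ∃ a ∈ S, ∃ b ∈ S, EMetric.diam S / 2 < edist a b := by
    by_contra hcon
    push_neg at hcon
    have : EMetric.diam S ≤ EMetric.diam S / 2 := EMetric.diam_le fun a ha b hb => hcon a ha b hb
    exact absurd (this.trans_lt hlt) (lt_irrefl _)
  have haneb : a ≠ b := by
    rintro rfl
    rw [edist_self] at hab
    exact absurd hab (by simp)
  set k : ℕ := PiNat.firstDiff a b with hk
  have hedist : edist a b = (1/2 : ℝ≥0∞)^k := by
    rw [edist_dist, PiNat.dist_eq_of_ne haneb, half_pow]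
  have hk_le_diam : (1/2 : ℝ≥0∞)^k ≤ EMetric.diam S := by
    rw [← hedist]; exact EMetric.edist_le_diam_of_mem ha hb
  have hdiam_lt : EMetric.diam S < 2 * (1/2 : ℝ≥0∞)^k := by
    rw [← hedist]
    rw [ENNReal.div_lt_iff (Or.inl (by norm_num)) (Or.inl (by norm_num))] at hab
    rw [mul_comm] at hab
    exact hab
  -- k ≥ L + 1
  have hkL : L + 1 ≤ k := by
    have h1 : ((1/2:ℝ≥0∞))^k ≤ (1/2:ℝ≥0∞)^(L+1) := hk_le_diam.trans hdiam
    rw [half_pow, half_pow, ENNReal.ofReal_le_ofReal_iff (by positivity)] at h1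
    exact ((pow_right_strictAnti₀ (by norm_num : (0:ℝ) < 1/2) (by norm_num)).le_iff_ge).1 h1
  refine ⟨k - 1, by omega, ?_, ?_⟩
  · apply subset_cyl _ hy
    exact le_of_lt (hdiam_lt.trans_le (two_mul_half_pow (by omega)).le)
  · rw [← two_mul_half_pow (show 1 ≤ k by omega)]
    exact mul_le_mul_right hk_le_diam _

lemma card_goodSets_le (p n : ℕ) :
    ((goodSets p n).card : ℝ) ≤ (2:ℝ) ^ ((((p:ℝ)+2) * n) / 2^p) := by
  classical
  set t : ℕ := n / 2 ^ p with ht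
  have htn : t ≤ n := Nat.div_le_self _ _
  have hsub : goodSets p n ⊆ (Finset.range (t+1)).biUnion
      (fun j => Finset.powersetCard j (Finset.range n)) := by
    intro S hS
    rw [goodSets, Finset.mem_filter, Finset.mem_powerset] at hS
    refine Finset.mem_biUnion.2 ⟨S.card, ?_, ?_⟩
    · rw [Finset.mem_range, Nat.lt_succ_iff, ht]
      exact Nat.le_div_iff_mul_le (Nat.pow_pos (by norm_num)) |>.2 hS.2
    · exact Finset.mem_powersetCard.2 ⟨hS.1, rfl⟩
  have hcard : (goodSets p n).card ≤ ∑ j ∈ Finset.range (t+1), n.choose j := by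
    calc (goodSets p n).card ≤ _ := Finset.card_le_card hsub
      _ ≤ ∑ j ∈ Finset.range (t+1), (Finset.powersetCard j (Finset.range n)).card :=
          Finset.card_biUnion_le
      _ = ∑ j ∈ Finset.range (t+1), n.choose j := by
          refine Finset.sum_congr rfl fun j _ => ?_
          rw [Finset.card_powersetCard, Finset.card_range]
  set x : ℝ := (1/2:ℝ)^p with hx
  have hxpos : 0 < x := by positivity
  have hx2 : x * 2^p = 1 := by rw [hx, ← mul_pow]; norm_num
  have step1 : (∑ j ∈ Finset.range (t+1), (n.choose j : ℝ))
      ≤ (2:ℝ)^(p*t) * (x + 1)^n := by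
    have h1 : ∀ j ∈ Finset.range (t+1), (n.choose j : ℝ)
        ≤ (2:ℝ)^(p*t) * (n.choose j * x^j) := by
      intro j hj
      have hjt : j ≤ t := Nat.lt_succ_iff.1 (Finset.mem_range.1 hj)
      have h2 : (1:ℝ) ≤ (2:ℝ)^(p*t) * x^j := by
        have : (2:ℝ)^(p*t) * x^j = (2:ℝ)^(p*t) / (2:ℝ)^(p*j) := by
          rw [hx, ← pow_mul, eq_div_iff (by positivity), mul_assoc, ← mul_pow]
          norm_num
        rw [this, le_div_iff₀ (by positivity)]
        rw [one_mul]
        exact pow_le_pow_right₀ (by norm_num) (Nat.mul_le_mul_left p hjt)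
      calc (n.choose j : ℝ) = 1 * (n.choose j) := (one_mul _).symm
        _ ≤ ((2:ℝ)^(p*t) * x^j) * n.choose j := by
            apply mul_le_mul_of_nonneg_right h2 (by positivity)
        _ = (2:ℝ)^(p*t) * (n.choose j * x^j) := by ring
    calc (∑ j ∈ Finset.range (t+1), (n.choose j : ℝ))
        ≤ ∑ j ∈ Finset.range (t+1), (2:ℝ)^(p*t) * (n.choose j * x^j) :=
          Finset.sum_le_sum h1
      _ = (2:ℝ)^(p*t) * ∑ j ∈ Finset.range (t+1), (n.choose j * x^j) := by
          rw [Finset.mul_sum]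
      _ ≤ (2:ℝ)^(p*t) * ∑ j ∈ Finset.range (n+1), (n.choose j * x^j) := by
          apply mul_le_mul_of_nonneg_left _ (by positivity)
          apply Finset.sum_le_sum_of_subset_of_nonneg
          · exact Finset.range_subset_range.2 (by omega)
          · intro j _ _; positivity
      _ = (2:ℝ)^(p*t) * (x + 1)^n := by
          rw [add_pow]
          congr 1
          refine Finset.sum_congr rfl fun j _ => ?_
          ring
  -- now rpow bounds
  have b1 : ((2:ℝ)^(p*t) : ℝ) ≤ (2:ℝ) ^ (((p:ℝ) * n) / 2^p) := by
    rw [← Real.rpow_natCast 2 (p*t)]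
    apply Real.rpow_le_rpow_of_exponent_le (by norm_num)
    push_cast
    rw [div_eq_mul_inv, mul_assoc]
    apply mul_le_mul_of_nonneg_left _ (by positivity)
    rw [← div_eq_mul_inv]
    calc (t:ℝ) ≤ (n:ℝ)/(2^p:ℕ) := by
          rw [ht]; exact_mod_cast Nat.cast_div_le
      _ = (n:ℝ)/2^p := by push_cast; ring
  have b2 : ((x + 1):ℝ)^n ≤ (2:ℝ) ^ ((2 * (n:ℝ)) / 2^p) := by
    have hbase : x + 1 ≤ (2:ℝ) ^ (2 * x) := by
      have h1 : x + 1 ≤ Real.exp x := by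
        have := Real.add_one_le_exp x
        linarith
      have h2 : Real.exp x ≤ Real.exp (2 * x * Real.log 2) := by
        apply Real.exp_le_exp.2
        nlinarith [Real.log_two_gt_d9, hxpos.le]
      have h3 : (2:ℝ) ^ (2*x) = Real.exp (2 * x * Real.log 2) := by
        rw [Real.rpow_def_of_pos (by norm_num)]
        ring_nf
      linarith
    calc (x+1)^n ≤ ((2:ℝ) ^ (2*x))^n := by
          apply pow_le_pow_left₀ (by positivity) hbase
      _ = (2:ℝ) ^ (2*x*n) := by
          rw [← Real.rpow_natCast ((2:ℝ)^(2*x)) n, ← Real.rpow_mul (by norm_num)]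
      _ = (2:ℝ) ^ ((2*(n:ℝ))/2^p) := by
          congr 1
          rw [hx, one_div, inv_pow, div_eq_mul_inv]
          ring
  calc ((goodSets p n).card : ℝ) ≤ ∑ j ∈ Finset.range (t+1), (n.choose j : ℝ) := by
        exact_mod_cast hcard
    _ ≤ (2:ℝ)^(p*t) * (x + 1)^n := step1
    _ ≤ (2:ℝ) ^ (((p:ℝ) * n) / 2^p) * (2:ℝ) ^ ((2 * (n:ℝ)) / 2^p) := by
        apply mul_le_mul b1 b2 (by positivity) (by positivity)
    _ = (2:ℝ) ^ ((((p:ℝ)+2) * n) / 2^p) := by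
        rw [← Real.rpow_add (by norm_num)]
        congr 1
        ring

def deltap (p : ℕ) : ℝ := ((p:ℝ)+2) / 2^p

lemma deltap_pos (p : ℕ) : 0 < deltap p := by unfold deltap; positivity

lemma key_count (p n : ℕ) (d : ℝ) :
    ((goodSets p n).card : ℝ≥0∞) * ((1/2:ℝ≥0∞)^n) ^ (d + deltap p)
      ≤ ((1/2:ℝ≥0∞)^n) ^ d := by
  have hhalf_ne0 : (1/2:ℝ≥0∞)^n ≠ 0 := by
    apply pow_ne_zero; simp
  have hhalf_netop : (1/2:ℝ≥0∞)^n ≠ ⊤ := by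
    apply ENNReal.pow_ne_top; simp
  rw [ENNReal.rpow_add d (deltap p) hhalf_ne0 hhalf_netop]
  rw [mul_comm (((1/2:ℝ≥0∞)^n) ^ d) _, ← mul_assoc]
  have hle1 : ((goodSets p n).card : ℝ≥0∞) * ((1/2:ℝ≥0∞)^n) ^ (deltap p) ≤ 1 := by
    have hc : ((goodSets p n).card : ℝ≥0∞) ≤ (2:ℝ≥0∞) ^ (deltap p * n) := by
      have h1 : ((goodSets p n).card : ℝ≥0∞) = ENNReal.ofReal ((goodSets p n).card : ℝ) := by
        rw [ENNReal.ofReal_natCast]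
      rw [h1]
      calc ENNReal.ofReal ((goodSets p n).card : ℝ)
          ≤ ENNReal.ofReal ((2:ℝ) ^ ((((p:ℝ)+2) * n) / 2^p)) :=
            ENNReal.ofReal_le_ofReal (card_goodSets_le p n)
        _ = (2:ℝ≥0∞) ^ (deltap p * n) := by
            rw [show (((p:ℝ)+2) * n) / 2^p = deltap p * n by unfold deltap; ring,
              ← ENNReal.ofReal_rpow_of_pos (by norm_num : (0:ℝ) < 2), ENNReal.ofReal_ofNat]
    have h2 : ((1/2:ℝ≥0∞)^n) ^ (deltap p) = (2:ℝ≥0∞) ^ (-(deltap p * n)) := by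
      rw [← ENNReal.rpow_natCast (1/2:ℝ≥0∞) n, ← ENNReal.rpow_mul]
      rw [one_div, ← ENNReal.rpow_neg_one (2:ℝ≥0∞), ← ENNReal.rpow_mul]
      congr 1
      ring
    rw [h2]
    calc ((goodSets p n).card : ℝ≥0∞) * (2:ℝ≥0∞) ^ (-(deltap p * n))
        ≤ (2:ℝ≥0∞) ^ (deltap p * n) * (2:ℝ≥0∞) ^ (-(deltap p * n)) := by
          exact mul_le_mul_left hc _
      _ = 1 := by
          rw [← ENNReal.rpow_add _ _ (by norm_num) (by norm_num)]
          simp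
  calc ((goodSets p n).card : ℝ≥0∞) * ((1/2:ℝ≥0∞)^n) ^ (deltap p) * ((1/2:ℝ≥0∞)^n) ^ d
      ≤ 1 * ((1/2:ℝ≥0∞)^n) ^ d := mul_le_mul_left hle1 _
    _ = _ := one_mul _

lemma extract {A : Set Sigma2} {d : ℝ} (hA : μH[d] A = 0) {η : ℝ≥0∞} (hη : 0 < η)
    {r : ℝ≥0∞} (hr : 0 < r) :
    ∃ t : ℕ → Set Sigma2, A ⊆ ⋃ i, t i ∧ (∀ i, EMetric.diam (t i) ≤ r) ∧
      ∑' i, ⨆ _ : (t i).Nonempty, EMetric.diam (t i) ^ d < η := by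
  rw [MeasureTheory.Measure.hausdorffMeasure_apply] at hA
  have h1 : (⨅ (t : ℕ → Set Sigma2) (_ : A ⊆ ⋃ n, t n) (_ : ∀ n, EMetric.diam (t n) ≤ r),
      ∑' n, ⨆ _ : (t n).Nonempty, EMetric.diam (t n) ^ d) ≤ 0 := by
    rw [← hA]
    exact le_iSup₂ (f := fun (r' : ℝ≥0∞) (_ : 0 < r') =>
      ⨅ (t : ℕ → Set Sigma2) (_ : A ⊆ ⋃ n, t n) (_ : ∀ n, EMetric.diam (t n) ≤ r'),
        ∑' n, ⨆ _ : (t n).Nonempty, EMetric.diam (t n) ^ d) r hr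
  have h2 := h1.trans_lt hη
  simp only [iInf_lt_iff] at h2
  obtain ⟨t, hcov, hdiam, hsum⟩ := h2
  exact ⟨t, hcov, hdiam, hsum⟩

lemma exists_pow_small (d : ℝ≥0) (hd : 0 < d) (L : ℕ) {c : ℝ≥0∞} (hc : 0 < c) :
    ∃ N : ℕ, L ≤ N ∧ ((1/2:ℝ≥0∞)^N) ^ (d:ℝ) ≤ c := by
  have hbase : ((1/2:ℝ≥0∞)) ^ (d:ℝ) < 1 := by
    apply ENNReal.rpow_lt_one (by norm_num) (by exact_mod_cast hd)
  have htend : Tendsto (fun N : ℕ => (((1/2:ℝ≥0∞)) ^ (d:ℝ))^N) atTop (nhds 0) :=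
    ENNReal.tendsto_pow_atTop_nhds_zero_of_lt_one hbase
  have hev := htend.eventually_le_const hc
  obtain ⟨N₀, hN₀⟩ := eventually_atTop.1 hev
  refine ⟨max L N₀, le_max_left _ _, ?_⟩
  have h1 : ((1/2:ℝ≥0∞)^(max L N₀)) ^ (d:ℝ) = (((1/2:ℝ≥0∞)) ^ (d:ℝ))^(max L N₀) := by
    rw [← ENNReal.rpow_natCast ((1/2:ℝ≥0∞)) (max L N₀), ← ENNReal.rpow_mul,
      ← ENNReal.rpow_natCast (((1/2:ℝ≥0∞)) ^ (d:ℝ)) (max L N₀), ← ENNReal.rpow_mul]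
    congr 1
    ring
  rw [h1]
  exact hN₀ _ (le_max_right _ _)

lemma cover_at_scale (p m : ℕ) (d : ℝ≥0) (hd : 0 < d) (hXG : μH[(d:ℝ)] XGset = 0)
    {η : ℝ≥0∞} (hη : 0 < η) (L : ℕ) (hLm : m ≤ L) :
    ∃ T : ℕ × Finset ℕ → Set Sigma2,
      (Eset p m ⊆ ⋃ z, T z) ∧ (∀ z, EMetric.diam (T z) ≤ (1/2:ℝ≥0∞)^L) ∧
      ∑' z, EMetric.diam (T z) ^ ((d:ℝ) + deltap p) ≤ ((2:ℝ≥0∞)^(d:ℝ) + 1) * η := by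
  classical
  obtain ⟨t, hcov, hdiam, hsum⟩ := extract hXG hη
    (show (0:ℝ≥0∞) < (1/2)^(L+1) by rw [pos_iff_ne_zero]; exact pow_ne_zero _ (by norm_num))
  have hex : ∀ i : ℕ, ∃ (yi : Sigma2) (ni : ℕ), L ≤ ni ∧
      (t i ∩ XGset ⊆ PiNat.cylinder yi ni) ∧
      ((1/2:ℝ≥0∞)^ni)^(d:ℝ) ≤ (2:ℝ≥0∞)^(d:ℝ) *
        (⨆ _ : (t i).Nonempty, EMetric.diam (t i) ^ (d:ℝ)) + η * (1/2)^(i+1) := by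
    intro i
    by_cases hne : (t i ∩ XGset).Nonempty
    · by_cases hd0 : EMetric.diam (t i) = 0
      · obtain ⟨N, hLN, hNs⟩ := exists_pow_small d hd L
          (ENNReal.mul_pos hη.ne' (pow_ne_zero _ (by norm_num : (1/2:ℝ≥0∞) ≠ 0)))
        refine ⟨hne.choose, N, hLN, ?_, ?_⟩
        · exact fun z hz => subset_cyl (by rw [hd0]; exact zero_le) hne.choose_spec.1 hz.1
        · exact hNs.trans (self_le_add_left _ _)
      · obtain ⟨n, hLn, hsub, hsc⟩ := exists_scale hne.choose_spec.1 (hdiam i) hd0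
        refine ⟨hne.choose, n, hLn, fun z hz => hsub hz.1, ?_⟩
        have h1 : ((1/2:ℝ≥0∞)^n)^(d:ℝ) ≤ (2 * EMetric.diam (t i))^(d:ℝ) :=
          ENNReal.rpow_le_rpow hsc (by positivity)
        have h2 : (2 * EMetric.diam (t i))^(d:ℝ)
            = (2:ℝ≥0∞)^(d:ℝ) * EMetric.diam (t i) ^ (d:ℝ) :=
          ENNReal.mul_rpow_of_nonneg _ _ (by positivity)
        have h3 : (⨆ _ : (t i).Nonempty, EMetric.diam (t i) ^ (d:ℝ))
            = EMetric.diam (t i) ^ (d:ℝ) := by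
          exact iSup_pos ⟨hne.choose, hne.choose_spec.1⟩
        rw [h3]
        exact (h1.trans_eq h2).trans (self_le_add_right _ _)
    · obtain ⟨N, hLN, hNs⟩ := exists_pow_small d hd L
        (ENNReal.mul_pos hη.ne' (pow_ne_zero _ (by norm_num : (1/2:ℝ≥0∞) ≠ 0)))
      refine ⟨fun _ => false, N, hLN, ?_, ?_⟩
      · intro z hz
        exact absurd ⟨z, hz⟩ hne
      · exact hNs.trans (self_le_add_left _ _)
  choose y nn hLn hsub hbound using hex
  refine ⟨fun z => if z.2 ∈ goodSets p (nn z.1) then PiNat.cylinder (mset (y z.1) z.2) (nn z.1)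
    else ∅, ?_, ?_, ?_⟩
  · -- coverage
    intro x hx
    have hz : zmap x ∈ XGset := zmap_mem_XG x
    obtain ⟨i, hi⟩ := Set.mem_iUnion.1 (hcov hz)
    have hzc : zmap x ∈ PiNat.cylinder (y i) (nn i) := hsub i ⟨hi, hz⟩
    obtain ⟨S, hS, hxS⟩ := cover_step (le_trans hLm (hLn i)) hx hzc
    refine Set.mem_iUnion.2 ⟨(i, S), ?_⟩
    simp only [hS, if_pos]
    exact hxS
  · -- diam
    rintro ⟨i, S⟩
    dsimp only
    split
    · refine (diam_cyl_le _ _).trans ?_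
      exact pow_le_pow_right_of_le_one' (by norm_num) (hLn i)
    · simp [EMetric.diam]
  · -- sum
    have hD : (0:ℝ) < (d:ℝ) + deltap p := by
      have := deltap_pos p
      positivity
    rw [ENNReal.tsum_prod']
    have hinner : ∀ i : ℕ, (∑' S : Finset ℕ, EMetric.diam
        (if S ∈ goodSets p (nn i) then PiNat.cylinder (mset (y i) S) (nn i) else ∅)
          ^ ((d:ℝ) + deltap p))
        ≤ (2:ℝ≥0∞)^(d:ℝ) * (⨆ _ : (t i).Nonempty, EMetric.diam (t i) ^ (d:ℝ))
          + η * (1/2)^(i+1) := by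
      intro i
      have hzero : ∀ S : Finset ℕ, S ∉ goodSets p (nn i) → EMetric.diam
          (if S ∈ goodSets p (nn i) then PiNat.cylinder (mset (y i) S) (nn i) else ∅)
            ^ ((d:ℝ) + deltap p) = 0 := by
        intro S hS
        rw [if_neg hS, EMetric.diam, EMetric.diam_empty, ENNReal.zero_rpow_of_pos hD]
      rw [tsum_eq_sum hzero]
      have hterm : ∀ S ∈ goodSets p (nn i), EMetric.diam
          (if S ∈ goodSets p (nn i) then PiNat.cylinder (mset (y i) S) (nn i) else ∅)
            ^ ((d:ℝ) + deltap p) ≤ ((1/2:ℝ≥0∞)^(nn i)) ^ ((d:ℝ) + deltap p) := by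
        intro S hS
        rw [if_pos hS]
        exact ENNReal.rpow_le_rpow (diam_cyl_le _ _) hD.le
      calc (∑ S ∈ goodSets p (nn i), EMetric.diam
          (if S ∈ goodSets p (nn i) then PiNat.cylinder (mset (y i) S) (nn i) else ∅)
            ^ ((d:ℝ) + deltap p))
          ≤ ∑ _S ∈ goodSets p (nn i), ((1/2:ℝ≥0∞)^(nn i)) ^ ((d:ℝ) + deltap p) :=
            Finset.sum_le_sum hterm
        _ = ((goodSets p (nn i)).card : ℝ≥0∞) * ((1/2:ℝ≥0∞)^(nn i)) ^ ((d:ℝ) + deltap p) := by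
            rw [Finset.sum_const, nsmul_eq_mul]
        _ ≤ ((1/2:ℝ≥0∞)^(nn i)) ^ (d:ℝ) := key_count p (nn i) (d:ℝ)
        _ ≤ _ := hbound i
    calc (∑' i : ℕ, ∑' S : Finset ℕ, EMetric.diam
        (if S ∈ goodSets p (nn i) then PiNat.cylinder (mset (y i) S) (nn i) else ∅)
          ^ ((d:ℝ) + deltap p))
        ≤ ∑' i : ℕ, ((2:ℝ≥0∞)^(d:ℝ) * (⨆ _ : (t i).Nonempty, EMetric.diam (t i) ^ (d:ℝ))
          + η * (1/2)^(i+1)) := ENNReal.tsum_le_tsum hinner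
      _ = (2:ℝ≥0∞)^(d:ℝ) * (∑' i : ℕ, ⨆ _ : (t i).Nonempty, EMetric.diam (t i) ^ (d:ℝ))
          + η * ∑' i : ℕ, ((1/2:ℝ≥0∞))^(i+1) := by
          rw [ENNReal.tsum_add, ENNReal.tsum_mul_left, ENNReal.tsum_mul_left]
      _ ≤ (2:ℝ≥0∞)^(d:ℝ) * η + η * 1 := by
          apply add_le_add
          · exact mul_le_mul_right hsum.le _
          · apply mul_le_mul_right
            have : (∑' i : ℕ, ((1/2:ℝ≥0∞))^(i+1)) = (1/2) * ∑' i : ℕ, ((1/2:ℝ≥0∞))^i := by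
              rw [← ENNReal.tsum_mul_left]
              congr 1
              funext i
              rw [pow_succ]
              ring
            rw [this, ENNReal.tsum_geometric, one_div, ENNReal.one_sub_inv_two, inv_inv,
              ENNReal.inv_mul_cancel (by norm_num) (by norm_num)]
      _ = ((2:ℝ≥0∞)^(d:ℝ) + 1) * η := by ring

def deltaq (p : ℕ) : ℝ≥0 := ((p:ℝ≥0)+2) / 2^p

lemma deltaq_coe (p : ℕ) : (deltaq p : ℝ) = deltap p := by
  unfold deltaq deltap
  push_cast
  ring

lemma Eset_null (p m : ℕ) (d : ℝ≥0) (hd : 0 < d) (hXG : μH[(d:ℝ)] XGset = 0) :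
    μH[((d:ℝ) + deltap p)] (Eset p m) = 0 := by
  refine le_antisymm ?_ zero_le
  refine ENNReal.le_of_forall_pos_le_add fun ε hε _ => ?_
  rw [zero_add]
  set C : ℝ≥0∞ := (2:ℝ≥0∞)^(d:ℝ) + 1 with hC
  have hC0 : C ≠ 0 := by
    rw [hC]; intro h; simp at h
  have hCtop : C ≠ ⊤ := by
    rw [hC]
    exact ENNReal.add_ne_top.2 ⟨ENNReal.rpow_ne_top_of_nonneg (by positivity) (by norm_num),
      by norm_num⟩
  set η : ℝ≥0∞ := (ε:ℝ≥0∞) / C with hη'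
  have hη : 0 < η := by
    rw [hη']
    exact ENNReal.div_pos (by exact_mod_cast hε.ne') hCtop
  choose T hTcov hTdiam hTsum using fun j : ℕ =>
    cover_at_scale p m d hd hXG hη (max m j) (le_max_left _ _)
  have hmain := MeasureTheory.Measure.hausdorffMeasure_le_liminf_tsum (l := atTop) ((d:ℝ) + deltap p) (Eset p m)
    (fun j : ℕ => (1/2:ℝ≥0∞)^(max m j)) ?_ T ?_ ?_
  · refine hmain.trans ?_
    have hlim : liminf (fun j : ℕ => ∑' z, EMetric.diam (T j z) ^ ((d:ℝ) + deltap p)) atTop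
        ≤ C * η := by
      apply liminf_le_of_frequently_le'
      exact Frequently.of_forall fun j => (hTsum j).trans_eq (by rw [hC])
    refine hlim.trans ?_
    rw [hη', ENNReal.mul_div_cancel hC0 hCtop]
  · -- tendsto
    have h1 : Tendsto (fun j : ℕ => (1/2:ℝ≥0∞)^j) atTop (nhds 0) :=
      ENNReal.tendsto_pow_atTop_nhds_zero_of_lt_one (by norm_num)
    refine h1.congr' ?_
    filter_upwards [eventually_ge_atTop m] with j hj
    rw [max_eq_right hj]
  · exact Eventually.of_forall fun j => hTdiam j
  · exact Eventually.of_forall fun j => hTcov j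

lemma dimH_Eset_le (p m : ℕ) (d : ℝ≥0) (hdim : dimH XGset < (d:ℝ≥0∞)) :
    dimH (Eset p m) ≤ (d:ℝ≥0∞) + (deltaq p : ℝ≥0∞) := by
  have hd0 : 0 < d := by
    have : (0:ℝ≥0∞) < (d:ℝ≥0∞) := zero_le.trans_lt hdim
    exact_mod_cast this
  have hXG : μH[(d:ℝ)] XGset = 0 := hausdorffMeasure_of_dimH_lt hdim
  have h0 := Eset_null p m d hd0 hXG
  have h1 : μH[((d + deltaq p : ℝ≥0) : ℝ)] (Eset p m) = 0 := by
    have : ((d + deltaq p : ℝ≥0) : ℝ) = (d:ℝ) + deltap p := by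
      push_cast
      rw [deltaq_coe]
    rw [this]
    exact h0
  have h2 := dimH_le_of_hausdorffMeasure_ne_top (by rw [h1]; exact ENNReal.zero_ne_top)
  refine h2.trans ?_
  rw [ENNReal.coe_add]

lemma exists_deltaq_small {ε : ℝ≥0} (hε : 0 < ε) : ∃ p : ℕ, (deltaq p : ℝ≥0∞) ≤ (ε:ℝ≥0∞) := by
  -- work in ℝ
  have hε' : (0:ℝ) < (ε:ℝ)/4 := by
    have : (0:ℝ) < ε := hε
    linarith
  obtain ⟨q, hq⟩ := exists_pow_lt_of_lt_one hε' (by norm_num : (1/2:ℝ) < 1)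
  refine ⟨2*q, ?_⟩
  rw [ENNReal.coe_le_coe, ← NNReal.coe_le_coe, deltaq_coe]
  unfold deltap
  have h2q : ((2*q:ℕ):ℝ) + 2 ≤ 2 * 2^q := by
    have := Nat.lt_two_pow_self (n := q)
    push_cast
    have : (q:ℝ) + 1 ≤ 2^q := by exact_mod_cast Nat.lt_two_pow_self (n := q)
    linarith
  have hpow : (2:ℝ)^(2*q) = 2^q * 2^q := by
    rw [two_mul, pow_add]
  have hq' : (1:ℝ)/2^q < (ε:ℝ)/4 := by
    rw [← one_div_pow]
    exact hq
  have h2qpos : (0:ℝ) < 2^q := by positivity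
  rw [div_le_iff₀ (by rw [hpow]; positivity), hpow]
  have h4 : 4 < (ε:ℝ) * 2^q := by
    rw [div_lt_div_iff₀ h2qpos (by norm_num : (0:ℝ) < 4)] at hq'
    linarith
  nlinarith [h2q, h4, h2qpos]

lemma dimH_A0_le : dimH (Aset 0) ≤ dimH XGset := by
  refine ENNReal.le_of_forall_pos_le_add fun ε hε hlt => ?_
  have hε2 : 0 < ε / 2 := by positivity
  obtain ⟨p, hp⟩ := exists_deltaq_small hε2
  obtain ⟨d, hd1, hd2⟩ := ENNReal.lt_iff_exists_nnreal_btwn.1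
    (ENNReal.lt_add_right hlt.ne (by exact_mod_cast hε2.ne' : ((ε/2 : ℝ≥0) : ℝ≥0∞) ≠ 0))
  have h1 : dimH (Aset 0) ≤ ⨆ m : ℕ, dimH (Eset p m) := by
    refine (dimH_mono (A0_subset_union p)).trans ?_
    rw [dimH_iUnion]
  have h2 : (⨆ m : ℕ, dimH (Eset p m)) ≤ (d:ℝ≥0∞) + (deltaq p : ℝ≥0∞) :=
    iSup_le fun m => dimH_Eset_le p m d hd1
  calc dimH (Aset 0) ≤ (d:ℝ≥0∞) + (deltaq p : ℝ≥0∞) := h1.trans h2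
    _ ≤ (dimH XGset + (ε/2 : ℝ≥0)) + (ε/2 : ℝ≥0) := add_le_add hd2.le hp
    _ = dimH XGset + ε := by
        rw [add_assoc, ← ENNReal.coe_add, add_halves]


end FLM

/-- `X_G = {(x_k) ∈ Σ₂ : x_k x_{2k} = 0 for all k ≥ 1}` satisfies `X_G ⊆ A_0` and
`dim_H(X_G) = dim_H(A_0)`. -/
theorem XG_subset_and_dimH_eq :
    {x : Sigma2 | ∀ k : ℕ, 1 ≤ k → xval x k * xval x (2 * k) = 0} ⊆ Aset 0 ∧
    dimH {x : Sigma2 | ∀ k : ℕ, 1 ≤ k → xval x k * xval x (2 * k) = 0} = dimH (Aset 0) :=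
  ⟨FLM.XG_subset_A0, le_antisymm (dimH_mono FLM.XG_subset_A0) FLM.dimH_A0_le⟩
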